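/- (Proposition 3, exact-regression form: convergence and non-strict monotonicity.) Let N ≥ 1, let φ : ℝ → ℝ^N be bounded and continuous, let θ ∈ ℝ^N, and let y(t) = φ(t)ᵀ θ for all t ∈ ℝ. Let d_1,…,d_{N−1} > 0 be pairwise distinct, define Φ_e(t) ∈ ℝ^{N×N} with first row φ(t)ᵀ and (j+1)-th row φ(t−d_j)ᵀ, Y_e(t) = (y(t), y(t−d_1),…,y(t−d_{N−1}))ᵀ, ψ_φ(t) = det Φ_e(t), and Y(t) = adj(Φ_e(t)) Y_e(t). Let γ_1,…,γ_N > 0 and let θ̂ : ℝ → ℝ^N be differentiable on [0,∞) with θ̂_i'(t) = γ_i ψ_φ(t) (Y_i(t) − ψ_φ(t) θ̂_i(t)) for all t ≥ 0. If ∫_0^t ψ_φ(s)² ds → ∞ as t → ∞, then for every i = 1,…,N: (a) θ̂_i(t) → θ_i as t → ∞; (b) θ̂_i is monotone on [0,∞); and (c) t ↦ |θ̂_i(t) − θ_i| is non-increasing on [0,∞). -/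

import Mathlib

/-- Proposition 3, exact-regression form: for the DREM estimator
built from the exact regression `y = φᵀθ` with `N-1` delay operators, if
`∫_0^t ψ_φ² → ∞` then each `θ̂_i → θ_i`, each `θ̂_i` is monotone on `[0,∞)`,
and `|θ̂_i - θ_i|` is non-increasing on `[0,∞)`. -/
theorem statement12 (N : ℕ) (hN : 1 ≤ N)
    (φ : ℝ → Fin N → ℝ) (hφ_cont : Continuous φ)
    (hφ_bdd : ∃ c : ℝ, ∀ t i, |φ t i| ≤ c)
    (θ : Fin N → ℝ)
    (y : ℝ → ℝ) (hy : ∀ t, y t = ∑ j, φ t j * θ j)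
    (d : Fin (N - 1) → ℝ) (hd_pos : ∀ j, d j > 0) (hd_dist : Function.Injective d)
    (Φe : ℝ → Matrix (Fin N) (Fin N) ℝ)
    (hΦe : ∀ t (i j : Fin N), Φe t i j =
      if h : (i : ℕ) = 0 then φ t j else φ (t - d ⟨(i : ℕ) - 1, by omega⟩) j)
    (Ye : ℝ → Fin N → ℝ)
    (hYe : ∀ t (i : Fin N), Ye t i =
      if h : (i : ℕ) = 0 then y t else y (t - d ⟨(i : ℕ) - 1, by omega⟩))
    (ψφ : ℝ → ℝ) (hψφ : ∀ t, ψφ t = (Φe t).det)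
    (Y : ℝ → Fin N → ℝ) (hY : ∀ t, Y t = (Φe t).adjugate.mulVec (Ye t))
    (γ : Fin N → ℝ) (hγ : ∀ i, γ i > 0)
    (θhat : ℝ → Fin N → ℝ)
    (hθhat : ∀ t ≥ (0 : ℝ), ∀ i : Fin N,
      HasDerivAt (fun s => θhat s i) (γ i * ψφ t * (Y t i - ψφ t * θhat t i)) t)
    (hL2 : Filter.Tendsto (fun t => ∫ s in (0 : ℝ)..t, (ψφ s) ^ 2)
      Filter.atTop Filter.atTop) :
    ∀ i : Fin N,
      Filter.Tendsto (fun t => θhat t i) Filter.atTop (nhds (θ i)) ∧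
      (MonotoneOn (fun t => θhat t i) (Set.Ici 0) ∨
        AntitoneOn (fun t => θhat t i) (Set.Ici 0)) ∧
      AntitoneOn (fun t => |θhat t i - θ i|) (Set.Ici 0) := by
  -- component continuity of φ
  have hφj : ∀ j : Fin N, Continuous fun t => φ t j :=
    fun j => (continuous_apply j).comp hφ_cont
  -- Ye = Φe.mulVec θ
  have hYe' : ∀ t, Ye t = (Φe t).mulVec θ := by
    intro t; funext i
    rw [hYe, Matrix.mulVec, dotProduct]
    by_cases h : (i : ℕ) = 0
    · simp only [h, dif_pos]
      rw [hy]
      exact Finset.sum_congr rfl fun j _ => by rw [hΦe]; simp [h]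
    · simp only [h, dif_neg, not_false_iff]
      rw [hy]
      exact Finset.sum_congr rfl fun j _ => by rw [hΦe]; simp [h]
  -- Y t i = ψφ t * θ i
  have hYid : ∀ t (i : Fin N), Y t i = ψφ t * θ i := by
    intro t i
    rw [hY, hYe' t, Matrix.mulVec_mulVec, Matrix.adjugate_mul, hψφ,
      Matrix.smul_mulVec, Matrix.one_mulVec]
    simp
  -- continuity of ψφ
  have hψ_cont : Continuous ψφ := by
    have hΦcont : Continuous Φe := by
      apply continuous_matrix
      intro i j
      by_cases h : (i : ℕ) = 0
      · simpa [hΦe, h] using hφj j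
      · have : Continuous fun t => φ (t - d ⟨(i : ℕ) - 1, by omega⟩) j :=
          (hφj j).comp (continuous_id.sub continuous_const)
        simpa [hΦe, h] using this
    have : Continuous fun t => (Φe t).det := hΦcont.matrix_det
    simpa [funext hψφ] using this
  set g : ℝ → ℝ := fun t => ∫ s in (0 : ℝ)..t, (ψφ s) ^ 2 with hgdef
  have hsq_cont : Continuous fun s => (ψφ s) ^ 2 := hψ_cont.pow 2
  have hg : ∀ t, HasDerivAt g ((ψφ t) ^ 2) t := by
    intro t
    exact intervalIntegral.integral_hasDerivAt_right
      (hsq_cont.intervalIntegrable _ _)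
      hsq_cont.aestronglyMeasurable.stronglyMeasurableAtFilter
      hsq_cont.continuousAt
  have hg_mono : Monotone g := by
    apply monotone_of_deriv_nonneg
    · exact fun t => (hg t).differentiableAt
    · intro t; rw [(hg t).deriv]; positivity
  have hg0 : g 0 = 0 := intervalIntegral.integral_same
  intro i
  set e0 : ℝ := θhat 0 i - θ i with he0
  set E : ℝ → ℝ := fun s => (θhat s i - θ i) * Real.exp (γ i * g s) with hEdef
  have hE : ∀ t, 0 ≤ t → HasDerivAt E 0 t := by
    intro t ht
    have h1 : HasDerivAt (fun s => θhat s i - θ i)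
        (-(γ i * (ψφ t) ^ 2 * (θhat t i - θ i))) t := by
      have := (hθhat t ht i).sub_const (θ i)
      exact this.congr_deriv (by rw [hYid]; ring)
    have h2 : HasDerivAt (fun s => Real.exp (γ i * g s))
        (γ i * (ψφ t) ^ 2 * Real.exp (γ i * g t)) t := by
      have := (((hg t).const_mul (γ i)).exp)
      convert this using 1; ring
    have := h1.mul h2
    exact this.congr_deriv (by ring)
  have hconst : ∀ t, 0 ≤ t → E t = E 0 := by
    intro t ht
    have hcont : ContinuousOn E (Set.Icc 0 t) :=
      fun x hx => ((hE x hx.1).continuousAt).continuousWithinAt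
    exact constant_of_has_deriv_right_zero hcont
      (fun x hx => (hE x hx.1).hasDerivWithinAt) t (Set.right_mem_Icc.mpr ht)
  have hE0 : E 0 = e0 := by simp [hEdef, hg0, he0]
  have key : ∀ t, 0 ≤ t → θhat t i - θ i = e0 * Real.exp (-(γ i * g t)) := by
    intro t ht
    have hx : Real.exp (γ i * g t) ≠ 0 := Real.exp_ne_zero _
    have h := (hconst t ht).trans hE0
    simp only [hEdef] at h
    rw [← h, Real.exp_neg, mul_assoc, mul_inv_cancel₀ hx, mul_one]
  have hmono_exp : ∀ a b : ℝ, a ≤ b →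
      Real.exp (-(γ i * g b)) ≤ Real.exp (-(γ i * g a)) := by
    intro a b hab
    apply Real.exp_le_exp.mpr
    have := hg_mono hab
    nlinarith [hγ i]
  refine ⟨?_, ?_, ?_⟩
  · -- convergence
    have hgt : Filter.Tendsto g Filter.atTop Filter.atTop := hL2
    have hneg : Filter.Tendsto (fun t => -(γ i * g t)) Filter.atTop Filter.atBot :=
      Filter.tendsto_neg_atTop_atBot.comp (hgt.const_mul_atTop (hγ i))
    have hexp : Filter.Tendsto (fun t => Real.exp (-(γ i * g t)))
        Filter.atTop (nhds 0) := Real.tendsto_exp_atBot.comp hneg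
    have h1 : Filter.Tendsto (fun t => θ i + e0 * Real.exp (-(γ i * g t)))
        Filter.atTop (nhds (θ i)) := by
      have := ((hexp.const_mul e0).const_add (θ i))
      simpa using this
    apply h1.congr'
    filter_upwards [Filter.eventually_ge_atTop (0 : ℝ)] with t ht
    have := key t ht
    linarith
  · -- monotone
    rcases le_or_gt 0 e0 with h0 | h0
    · right
      intro a ha b hb hab
      have ka := key a ha; have kb := key b hb
      have := hmono_exp a b hab
      have : e0 * Real.exp (-(γ i * g b)) ≤ e0 * Real.exp (-(γ i * g a)) :=
        mul_le_mul_of_nonneg_left this h0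
      simp only []
      linarith
    · left
      intro a ha b hb hab
      have ka := key a ha; have kb := key b hb
      have hle := hmono_exp a b hab
      have : e0 * Real.exp (-(γ i * g a)) ≤ e0 * Real.exp (-(γ i * g b)) := by
        nlinarith
      simp only []
      linarith
  · -- |error| antitone
    intro a ha b hb hab
    have ka := key a ha; have kb := key b hb
    simp only []
    rw [ka, kb, abs_mul, abs_mul, Real.abs_exp, Real.abs_exp]
    exact mul_le_mul_of_nonneg_left (hmono_exp a b hab) (abs_nonneg _)
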